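/- arXiv:math/9706225 — 2 statements merged into one kernel-verified Lean document; each statement's English description precedes it below -/
import Mathlib

section
/- Let μ = μ^{<μ} > ℵ₀, λ = μ⁺, and let ℙ = ℙ(C) be the club-coding poset associated to a club C ⊆ λ, a choice of μ-filtrations of each α < λ with canonical functions f_α, and clubs C_{αβ} ⊆ μ (for α < β < λ) with f_α(i) < f_β(i) for all i ∈ C_{αβ}. For every α < λ and β < μ, the set D_{αβ} = {p ∈ ℙ : α ∈ B^p and δ^p ≥ β} is dense and open in ℙ (dense: every condition has an extension in D_{αβ}; open: upward closed under the extension order). -/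
open Cardinal Ordinal Set

/-- The order type of a set of ordinals (the unique ordinal whose lift equals the
order type of the induced well-order; any set of ordinals occurring below is bounded,
hence small, so this ordinal exists). -/
noncomputable def otp (s : Set Ordinal) : Ordinal :=
  sInf {o : Ordinal | Ordinal.lift.{1, 0} o =
    Ordinal.type (Subrel ((· < ·) : Ordinal → Ordinal → Prop) (· ∈ s))}

/-- `C` is a closed unbounded subset of (the set of ordinals below) `κ`:
it consists of ordinals `< κ`, is unbounded in `κ`, and contains the supremum
of each of its nonempty subsets that is bounded below `κ`. -/
def IsClubOrd (κ : Ordinal) (C : Set Ordinal) : Prop :=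
  C ⊆ Set.Iio κ ∧
  (∀ a < κ, ∃ b ∈ C, a ≤ b) ∧
  (∀ S ⊆ C, S.Nonempty → sSup S < κ → sSup S ∈ C)

/-- `⟨a i : i < μ⟩` is a `μ`-filtration of the ordinal `α`: an increasing continuous
sequence of subsets of `α`, each of cardinality `< μ`, with union `α`. -/
def IsFiltrationOrd (μ : Cardinal) (α : Ordinal) (a : Ordinal → Set Ordinal) : Prop :=
  (∀ i < μ.ord, a i ⊆ Set.Iio α) ∧
  (∀ i j : Ordinal, i ≤ j → j < μ.ord → a i ⊆ a j) ∧
  (∀ ν < μ.ord, Order.IsSuccLimit ν → a ν = ⋃ i ∈ Set.Iio ν, a i) ∧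
  (∀ i < μ.ord, Cardinal.mk ↥(a i) < Cardinal.lift.{1,0} μ) ∧
  (⋃ i ∈ Set.Iio μ.ord, a i) = Set.Iio α

/-- A condition in the club-coding poset `ℙ(C)` associated to: a cardinal `μ` (with
`λ = μ⁺`), a club `C ⊆ λ`, the canonical functions `f α` (for `α < λ`), and clubs
`Cab α β ⊆ μ` (for `α < β < λ`) on which `f α < f β`.  A condition is a quadruple
`(B, F, c, g)` where `B ⊆ λ` has size `< μ`; `F` is a partial function from `μ × μ`
to `{0,1}` with domain of size `< μ` such that for each `α ∈ B` the set
`{i < μ : (i, f α i) ∈ dom F}` is an ordinal `j α`; `c` assigns to each `α ∈ B` a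
nonempty closed subset of `j α`, all with the same maximum `δ`, on which `F (i, f α i)`
is `1` if `α ∈ C` and `0` if `α ∉ C`; and `g` is a partial function from pairs
`α < β` from `B` into `μ` such that `c α ∖ g (α, β)` is nonempty and contained in
`Cab α β`. -/
structure ClubCond (μ : Cardinal) (C : Set Ordinal) (f : Ordinal → Ordinal → Ordinal)
    (Cab : Ordinal → Ordinal → Set Ordinal) where
  B : Set Ordinal
  F : Ordinal → Ordinal → Option (Fin 2)
  c : Ordinal → Set Ordinal
  g : Ordinal → Ordinal → Option Ordinal
  j : Ordinal → Ordinal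
  δ : Ordinal
  B_sub : B ⊆ Set.Iio (Order.succ μ).ord
  B_card : Cardinal.mk ↥B < Cardinal.lift.{1, 0} μ
  F_dom_sub : ∀ i k : Ordinal, (F i k).isSome → i < μ.ord ∧ k < μ.ord
  F_card : Cardinal.mk ↥{x : Ordinal × Ordinal | (F x.1 x.2).isSome} <
    Cardinal.lift.{1, 0} μ
  j_spec : ∀ α ∈ B, {i : Ordinal | i < μ.ord ∧ (F i (f α i)).isSome} = Set.Iio (j α)
  c_sub : ∀ α ∈ B, c α ⊆ Set.Iio (j α)
  c_closed : ∀ α ∈ B, ∀ S ⊆ c α, S.Nonempty → sSup S ∈ c α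
  c_max : ∀ α ∈ B, δ ∈ c α ∧ ∀ x ∈ c α, x ≤ δ
  F_one : ∀ α ∈ B, α ∈ C → ∀ i ∈ c α, F i (f α i) = some 1
  F_zero : ∀ α ∈ B, α ∉ C → ∀ i ∈ c α, F i (f α i) = some 0
  g_dom : ∀ α β : Ordinal, (g α β).isSome → α ∈ B ∧ β ∈ B ∧ α < β
  g_rng : ∀ α β ξ : Ordinal, g α β = some ξ → ξ < μ.ord
  g_cond : ∀ α β ξ : Ordinal, g α β = some ξ →
    (c α \ Set.Iio ξ).Nonempty ∧ c α \ Set.Iio ξ ⊆ Cab α β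

/-- The extension order of the club-coding poset: `q` extends `p` (written `p.le q`)
iff `B^p ⊆ B^q`, `F^p ⊆ F^q`, `g^p ⊆ g^q`, each `c^p α` (for `α ∈ B^p`) is an initial
segment of `c^q α`, and if `δ^p < δ^q` then every pair from `B^p` is in `dom g^q`. -/
def ClubCond.le {μ : Cardinal} {C : Set Ordinal} {f : Ordinal → Ordinal → Ordinal}
    {Cab : Ordinal → Ordinal → Set Ordinal}
    (p q : ClubCond μ C f Cab) : Prop :=
  p.B ⊆ q.B ∧
  (∀ i k : Ordinal, ∀ v : Fin 2, p.F i k = some v → q.F i k = some v) ∧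
  (∀ α β ξ : Ordinal, p.g α β = some ξ → q.g α β = some ξ) ∧
  (∀ α ∈ p.B, p.c α ⊆ q.c α ∧ ∀ x ∈ q.c α, x ≤ p.δ → x ∈ p.c α) ∧
  (p.δ < q.δ → ∀ α ∈ p.B, ∀ β ∈ p.B, α < β → (q.g α β).isSome)

-- boundedness lemma
lemma small_bdd_aux {μ : Cardinal} (hreg : μ.IsRegular) {S : Set Ordinal}
    (hS : S ⊆ Set.Iio μ.ord) (hcard : Cardinal.mk ↥S < Cardinal.lift.{1,0} μ) :
    ∃ b < μ.ord, ∀ x ∈ S, x ≤ b := by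
  classical
  set e := (Ordinal.ToType.mk : Set.Iio μ.ord ≃o μ.ord.ToType)
  set T : Set μ.ord.ToType := {t | ((e.symm t : Set.Iio μ.ord) : Ordinal) ∈ S} with hT
  have hTcard : Cardinal.mk ↥T < μ := by
    have hinj : Function.Injective (fun t : ↥T => (⟨((e.symm t.1 : Set.Iio μ.ord) : Ordinal), t.2⟩ : ↥S)) := by
      intro a b hab
      have : ((e.symm a.1 : Set.Iio μ.ord) : Ordinal) = ((e.symm b.1 : Set.Iio μ.ord) : Ordinal) := congrArg (fun z : ↥S => (z : Ordinal)) hab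
      have h2 : (e.symm a.1 : Set.Iio μ.ord) = (e.symm b.1 : Set.Iio μ.ord) := Subtype.ext this
      have h3 : a.1 = b.1 := e.symm.injective h2
      exact Subtype.ext h3
    have h1 : Cardinal.lift.{1,0} (Cardinal.mk ↥T) ≤ Cardinal.lift.{0,1} (Cardinal.mk ↥S) :=
      Cardinal.lift_mk_le'.mpr ⟨⟨_, hinj⟩⟩
    rw [Cardinal.lift_id'] at h1
    have := h1.trans_lt hcard
    exact Cardinal.lift_lt.mp this
  set F : ↥T → Ordinal := fun t => ((e.symm t.1 : Set.Iio μ.ord) : Ordinal) with hF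
  have hFlt : ∀ t, F t < μ.ord := fun t => (e.symm t.1).2
  have hsup : iSup F < μ.ord := Cardinal.iSup_lt_ord_of_isRegular hreg hTcard hFlt
  refine ⟨iSup F, hsup, ?_⟩
  intro x hx
  have hmem : (e ⟨x, hS hx⟩ : μ.ord.ToType) ∈ T := by
    simp only [hT, Set.mem_setOf_eq, OrderIso.symm_apply_apply]
    exact hx
  have : F ⟨_, hmem⟩ = x := by
    simp only [hF, OrderIso.symm_apply_apply]
  calc x = F ⟨_, hmem⟩ := this.symm
    _ ≤ iSup F := le_ciSup (Ordinal.bddAbove_range F) _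

-- intersection point of < μ many clubs above a bound
lemma exists_club_point {μ : Cardinal} (hreg : μ.IsRegular) (hunc : ℵ₀ < μ)
    {ι : Type 1} (hι : Cardinal.mk ι < Cardinal.lift.{1,0} μ)
    (D : ι → Set Ordinal) (hD : ∀ i, IsClubOrd μ.ord (D i))
    (b : Ordinal) (hb : b < μ.ord) :
    ∃ x, b < x ∧ x < μ.ord ∧ ∀ i, x ∈ D i := by
  classical
  have hlim : Order.IsSuccLimit μ.ord := Cardinal.isSuccLimit_ord hunc.le
  have hnext : ∀ y, y < μ.ord → ∃ z, y < z ∧ z < μ.ord ∧ ∀ i, ∃ w ∈ D i, y < w ∧ w ≤ z := by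
    intro y hy
    have hsucc : y + 1 < μ.ord := hlim.succ_lt hy
    choose n hn1 hn2 using fun i => (hD i).2.1 (y + 1) hsucc
    have hrsub : Set.range n ⊆ Set.Iio μ.ord := by
      rintro _ ⟨i, rfl⟩; exact (hD i).1 (hn1 i)
    have hrcard : Cardinal.mk ↥(Set.range n) < Cardinal.lift.{1,0} μ :=
      lt_of_le_of_lt Cardinal.mk_range_le hι
    obtain ⟨c, hc, hcall⟩ := small_bdd_aux hreg hrsub hrcard
    refine ⟨max (y + 1) c, lt_of_lt_of_le (Order.lt_succ y) ?_, max_lt hsucc hc, ?_⟩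
    · rw [Ordinal.add_one_eq_succ]; exact le_max_left _ _
    · intro i
      refine ⟨n i, hn1 i, ?_, le_trans (hcall _ ⟨i, rfl⟩) (le_max_right _ _)⟩
      exact lt_of_lt_of_le (Order.lt_succ y) (hn2 i)
  -- step function
  set st : Ordinal → Ordinal := fun y => if h : y < μ.ord then (hnext y h).choose else 0 with hst
  have hst1 : ∀ y (h : y < μ.ord), y < st y ∧ st y < μ.ord ∧ ∀ i, ∃ w ∈ D i, y < w ∧ w ≤ st y := by
    intro y h
    simp only [hst, dif_pos h]
    exact (hnext y h).choose_spec
  set x : ℕ → Ordinal := fun n => Nat.rec b (fun _ ih => st ih) n with hx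
  have hxlt : ∀ n, x n < μ.ord := by
    intro n; induction n with
    | zero => exact hb
    | succ m ih => exact (hst1 (x m) ih).2.1
  have hxmono : ∀ n, x n < x (n + 1) := fun n => (hst1 (x n) (hxlt n)).1
  have hbddx : BddAbove (Set.range x) := Ordinal.bddAbove_range x
  set x' : Ordinal := iSup x with hx'
  have hx'lt : x' < μ.ord :=
    Cardinal.iSup_lt_ord_of_isRegular hreg (by simpa using hunc) hxlt
  have hle_x' : ∀ n, x n ≤ x' := fun n => le_ciSup hbddx n
  refine ⟨x', lt_of_lt_of_le (hxmono 0) (hle_x' 1), hx'lt, ?_⟩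
  intro i
  choose w hw1 hw2 hw3 using fun n => (hst1 (x n) (hxlt n)).2.2 i
  have hSsub : Set.range w ⊆ D i := by rintro _ ⟨n, rfl⟩; exact hw1 n
  have hbddw : BddAbove (Set.range w) := Ordinal.bddAbove_range w
  have hsup_eq : sSup (Set.range w) = x' := by
    apply le_antisymm
    · apply csSup_le (Set.range_nonempty w)
      rintro _ ⟨n, rfl⟩
      exact le_trans (hw3 n) (hle_x' (n + 1))
    · apply ciSup_le
      intro n
      exact le_trans (le_of_lt (hw2 n)) (le_csSup hbddw ⟨n, rfl⟩)
  have := (hD i).2.2 (Set.range w) hSsub (Set.range_nonempty w) (by rw [hsup_eq]; exact hx'lt)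
  rwa [hsup_eq] at this


-- order types of small sets of ordinals are small
lemma otp_lt_ord {μ : Cardinal} {s : Set Ordinal}
    (h : Cardinal.mk ↥s < Cardinal.lift.{1,0} μ) : otp s < μ.ord := by
  set t := Ordinal.type (Subrel ((· < ·) : Ordinal → Ordinal → Prop) (· ∈ s)) with ht
  have hcard : t.card < Cardinal.lift.{1,0} μ := by
    rw [ht, Ordinal.card_type]; exact h
  have hlt : t < (Cardinal.lift.{1,0} μ).ord := Cardinal.lt_ord.mpr hcard
  rw [← Cardinal.lift_ord] at hlt
  obtain ⟨o, ho⟩ := Ordinal.mem_range_lift_of_le hlt.le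
  have h1 : otp s ≤ o := csInf_le (OrderBot.bddBelow _) ho
  have h2 : o < μ.ord := by
    rw [← Ordinal.lift_lt.{1,0}, ho]; exact hlt
  exact h1.trans_lt h2

/-- For `μ = μ^{<μ} > ℵ₀`, `λ = μ⁺`, every `α < λ` and `β < μ`, the set
`D_{αβ} = {p ∈ ℙ(C) : α ∈ B^p and δ^p ≥ β}` is dense and open in the club-coding
poset `ℙ(C)`. -/
theorem clubCond_dense_open (μ : Cardinal) (hsmall : μ ^< μ = μ) (hunc : ℵ₀ < μ)
    (C : Set Ordinal) (hC : IsClubOrd (Order.succ μ).ord C)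
    (f : Ordinal → Ordinal → Ordinal)
    (hf : ∀ α < (Order.succ μ).ord, ∃ a : Ordinal → Set Ordinal,
      IsFiltrationOrd μ α a ∧ ∀ i < μ.ord, f α i = otp (a i))
    (Cab : Ordinal → Ordinal → Set Ordinal)
    (hCab : ∀ α β : Ordinal, α < β → β < (Order.succ μ).ord →
      IsClubOrd μ.ord (Cab α β) ∧ ∀ i ∈ Cab α β, f α i < f β i)
    (α : Ordinal) (hα : α < (Order.succ μ).ord) (β : Ordinal) (hβ : β < μ.ord) :
    (∀ p : ClubCond μ C f Cab, ∃ q : ClubCond μ C f Cab,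
      p.le q ∧ α ∈ q.B ∧ β ≤ q.δ) ∧
    (∀ p q : ClubCond μ C f Cab, p.le q → α ∈ p.B ∧ β ≤ p.δ → α ∈ q.B ∧ β ≤ q.δ) := by
  classical
  have hreg : μ.IsRegular := by
    refine ⟨hunc.le, ?_⟩
    by_contra h
    push_neg at h
    have h1 : μ < μ ^ Ordinal.cof μ.ord := Cardinal.lt_power_cof hunc.le
    have h2 : μ ^ Ordinal.cof μ.ord ≤ μ ^< μ := Cardinal.le_powerlt μ h
    rw [hsmall] at h2
    exact absurd (h1.trans_le h2) (lt_irrefl μ)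
  have hlim : Order.IsSuccLimit μ.ord := Cardinal.isSuccLimit_ord hunc.le
  have hfbd : ∀ γ ∈ Set.Iio (Order.succ μ).ord, ∀ i, i < μ.ord → f γ i < μ.ord := by
    intro γ hγ i hi
    obtain ⟨a, hfa, hfo⟩ := hf γ hγ
    rw [hfo i hi]
    exact otp_lt_ord (hfa.2.2.2.1 i hi)
  constructor
  · intro p
    set B' : Set Ordinal := insert α p.B with hB'def
    have hαB' : α ∈ B' := Set.mem_insert _ _
    have hB'sub : B' ⊆ Set.Iio (Order.succ μ).ord := by
      intro γ hγ
      rcases hγ with rfl | hγ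
      · exact hα
      · exact p.B_sub hγ
    have hμlift : ℵ₀ ≤ Cardinal.lift.{1,0} μ := by
      rw [Cardinal.aleph0_le_lift]; exact hunc.le
    have hone : (1 : Cardinal) < Cardinal.lift.{1,0} μ :=
      lt_of_lt_of_le Cardinal.one_lt_aleph0 hμlift
    have hB'card : Cardinal.mk ↥B' < Cardinal.lift.{1,0} μ :=
      lt_of_le_of_lt Cardinal.mk_insert_le (Cardinal.add_lt_of_lt hμlift p.B_card hone)
    set E : Set Ordinal := {i | ∃ k, (p.F i k).isSome} with hEdef
    have hEsub : E ⊆ Set.Iio μ.ord := by rintro i ⟨k, hk⟩; exact (p.F_dom_sub i k hk).1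
    have hEcard : Cardinal.mk ↥E < Cardinal.lift.{1,0} μ := by
      have hsub : E ⊆ Prod.fst '' {x : Ordinal × Ordinal | (p.F x.1 x.2).isSome} := by
        rintro i ⟨k, hk⟩; exact ⟨(i, k), hk, rfl⟩
      exact lt_of_le_of_lt
        (le_trans (Cardinal.mk_le_mk_of_subset hsub) Cardinal.mk_image_le) p.F_card
    obtain ⟨bE, hbE, hEle⟩ := small_bdd_aux hreg hEsub hEcard
    set D : ↥B' × ↥B' → Set Ordinal := fun x =>
      if (x.1 : Ordinal) < (x.2 : Ordinal) then Cab x.1 x.2 else Set.Iio μ.ord with hDdef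
    have hDclub : ∀ x, IsClubOrd μ.ord (D x) := by
      intro x
      simp only [hDdef]
      split
      · exact (hCab x.1 x.2 (by assumption) (hB'sub x.2.2)).1
      · exact ⟨fun y hy => hy, fun a ha => ⟨a, ha, le_rfl⟩, fun S hS hne hlt => hlt⟩
    have hpaircard : Cardinal.mk (↥B' × ↥B') < Cardinal.lift.{1,0} μ := by
      rw [Cardinal.mk_prod]
      simp only [Cardinal.lift_id]
      exact Cardinal.mul_lt_of_lt hμlift hB'card hB'card
    obtain ⟨δ', hδ'gt, hδ'lt, hδ'mem⟩ :=
      exists_club_point hreg hunc hpaircard D hDclub (max bE β) (max_lt hbE hβ)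
    have hδ'Cab : ∀ γ γ', γ ∈ B' → γ' ∈ B' → γ < γ' → δ' ∈ Cab γ γ' := by
      intro γ γ' hγ hγ' hltγ
      have := hδ'mem (⟨γ, hγ⟩, ⟨γ', hγ'⟩)
      simpa only [hDdef, if_pos hltγ] using this
    have hEδ : ∀ i ∈ E, i < δ' := fun i hi =>
      lt_of_le_of_lt (le_trans (hEle i hi) (le_max_left _ _)) hδ'gt
    have hβδ' : β ≤ δ' := le_of_lt (lt_of_le_of_lt (le_max_right _ _) hδ'gt)
    have hδ'E : δ' ∉ E := fun h => lt_irrefl δ' (hEδ δ' h)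
    have hjE : ∀ γ ∈ p.B, Set.Iio (p.j γ) ⊆ E := by
      intro γ hγ i hi
      rw [← p.j_spec γ hγ] at hi
      exact ⟨f γ i, hi.2⟩
    have hjle : ∀ γ ∈ p.B, p.j γ ≤ δ' := by
      intro γ hγ
      by_contra h
      push_neg at h
      exact hδ'E (hjE γ hγ h)
    have hpδ : ∀ γ ∈ p.B, p.δ < δ' := by
      intro γ hγ
      exact hEδ _ (hjE γ hγ (p.c_sub γ hγ (p.c_max γ hγ).1))
    have hclt : ∀ γ ∈ p.B, ∀ x ∈ p.c γ, x < δ' := by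
      intro γ hγ x hx
      exact lt_of_lt_of_le (p.c_sub γ hγ hx) (hjle γ hγ)
    have hinj : ∀ γ ∈ B', ∀ γ' ∈ B', f γ δ' = f γ' δ' → γ = γ' := by
      intro γ hγ γ' hγ' heq
      rcases lt_trichotomy γ γ' with h | h | h
      · exact absurd heq (ne_of_lt ((hCab γ γ' h (hB'sub hγ')).2 δ' (hδ'Cab γ γ' hγ hγ' h)))
      · exact h
      · exact absurd heq.symm
          (ne_of_lt ((hCab γ' γ h (hB'sub hγ)).2 δ' (hδ'Cab γ' γ hγ' hγ h)))
    have hδ'succ : δ' + 1 < μ.ord := by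
      rw [Ordinal.add_one_eq_succ]; exact hlim.succ_lt hδ'lt
    have hlt1 : δ' < δ' + 1 := by
      rw [Ordinal.add_one_eq_succ]; exact Order.lt_succ δ'
    have hle1 : ∀ i : Ordinal, i < δ' + 1 ↔ i ≤ δ' := by
      intro i; rw [Ordinal.add_one_eq_succ]; exact Order.lt_succ_iff
    -- the new condition's data
    set F' : Ordinal → Ordinal → Option (Fin 2) := fun i k =>
      if (p.F i k).isSome then p.F i k
      else if i < δ' + 1 ∧ ∃ γ ∈ B', k = f γ i then
        (if i = δ' ∧ ∃ γ ∈ B', γ ∈ C ∧ k = f γ δ' then some 1 else some 0)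
      else none with hF'def
    set c' : Ordinal → Set Ordinal := fun γ => {x | x = δ' ∨ (γ ∈ p.B ∧ x ∈ p.c γ)} with hc'def
    set g' : Ordinal → Ordinal → Option Ordinal := fun γ γ' =>
      if (p.g γ γ').isSome then p.g γ γ'
      else if γ ∈ B' ∧ γ' ∈ B' ∧ γ < γ' then some δ' else none with hg'def
    have hc'max : ∀ γ, ∀ x ∈ c' γ, x ≤ δ' := by
      intro γ x hx
      rcases hx with rfl | ⟨hγ, hx⟩
      · exact le_rfl
      · exact le_of_lt (hclt γ hγ x hx)
    have hF'dom : ∀ i k : Ordinal, (F' i k).isSome → i < μ.ord ∧ k < μ.ord := by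
      intro i k h
      simp only [hF'def] at h
      split at h
      · exact p.F_dom_sub i k (by assumption)
      · split at h
        · rename_i hcond
          obtain ⟨hi, γ, hγ, rfl⟩ := hcond
          have hiμ : i < μ.ord := lt_of_le_of_lt ((hle1 i).mp hi) hδ'lt
          exact ⟨hiμ, hfbd γ (hB'sub hγ) i hiμ⟩
        · simp at h
    have hF'card : Cardinal.mk ↥{x : Ordinal × Ordinal | (F' x.1 x.2).isSome} <
        Cardinal.lift.{1, 0} μ := by
      have himg : Cardinal.mk
          ↥((fun pr : Ordinal × Ordinal => (pr.1, f pr.2 pr.1)) ''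
            (Set.Iio (δ' + 1) ×ˢ B')) < Cardinal.lift.{1,0} μ := by
        refine lt_of_le_of_lt Cardinal.mk_image_le ?_
        rw [Cardinal.mk_congr (Equiv.Set.prod _ _), Cardinal.mk_prod]
        simp only [Cardinal.lift_id]
        refine Cardinal.mul_lt_of_lt hμlift ?_ hB'card
        rw [Ordinal.mk_Iio_ordinal]
        exact Cardinal.lift_lt.mpr (Cardinal.lt_ord.mp hδ'succ)
      have hsub : {x : Ordinal × Ordinal | (F' x.1 x.2).isSome} ⊆
          {x : Ordinal × Ordinal | (p.F x.1 x.2).isSome} ∪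
          ((fun pr : Ordinal × Ordinal => (pr.1, f pr.2 pr.1)) ''
            (Set.Iio (δ' + 1) ×ˢ B')) := by
        intro x hx
        simp only [Set.mem_setOf_eq, hF'def] at hx
        by_cases h1 : (p.F x.1 x.2).isSome
        · exact Or.inl h1
        · rw [if_neg h1] at hx
          by_cases h2 : x.1 < δ' + 1 ∧ ∃ γ ∈ B', x.2 = f γ x.1
          · obtain ⟨hi, γ, hγ, hk⟩ := h2
            refine Or.inr ⟨(x.1, γ), ⟨hi, hγ⟩, ?_⟩
            show (x.1, f γ x.1) = x
            rw [← hk]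
          · rw [if_neg h2] at hx; simp at hx
      exact lt_of_le_of_lt
        (le_trans (Cardinal.mk_le_mk_of_subset hsub) (Cardinal.mk_union_le _ _))
        (Cardinal.add_lt_of_lt hμlift p.F_card himg)
    have hj' : ∀ γ ∈ B', {i : Ordinal | i < μ.ord ∧ (F' i (f γ i)).isSome} =
        Set.Iio (δ' + 1) := by
      intro γ hγ
      ext i
      simp only [Set.mem_setOf_eq, Set.mem_Iio]
      constructor
      · rintro ⟨hiμ, hsome⟩
        simp only [hF'def] at hsome
        split at hsome
        · exact lt_trans (hEδ i ⟨_, by assumption⟩) hlt1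
        · split at hsome
          · rename_i hcond; exact hcond.1
          · simp at hsome
      · intro hi
        have hiμ : i < μ.ord := lt_of_le_of_lt ((hle1 i).mp hi) hδ'lt
        refine ⟨hiμ, ?_⟩
        simp only [hF'def]
        split
        · assumption
        · have h2 : i < δ' + 1 ∧ ∃ γ' ∈ B', f γ i = f γ' i := ⟨hi, γ, hγ, rfl⟩
          rw [if_pos h2]
          split <;> rfl
    have hc'sub : ∀ γ ∈ B', c' γ ⊆ Set.Iio (δ' + 1) := by
      intro γ _ x hx
      exact (hle1 x).mpr (hc'max γ x hx)
    have hc'closed : ∀ γ ∈ B', ∀ S ⊆ c' γ, S.Nonempty → sSup S ∈ c' γ := by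
      intro γ _ S hS hne
      by_cases hδS : δ' ∈ S
      · have hub : ∀ x ∈ S, x ≤ δ' := fun x hx => hc'max γ x (hS hx)
        have : sSup S = δ' := le_antisymm (csSup_le hne hub) (le_csSup ⟨δ', hub⟩ hδS)
        rw [this]; exact Or.inl rfl
      · obtain ⟨x₀, hx₀⟩ := hne
        have hγB : γ ∈ p.B := by
          rcases hS hx₀ with rfl | ⟨h, _⟩
          · exact absurd hx₀ hδS
          · exact h
        have hSsub : S ⊆ p.c γ := by
          intro x hx
          rcases hS hx with rfl | ⟨_, h⟩
          · exact absurd hx hδS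
          · exact h
        exact Or.inr ⟨hγB, p.c_closed γ hγB S hSsub ⟨x₀, hx₀⟩⟩
    have hF'one : ∀ γ ∈ B', γ ∈ C → ∀ i ∈ c' γ, F' i (f γ i) = some 1 := by
      intro γ hγ hγC i hi
      rcases hi with hiδ | ⟨hγB, hi⟩
      · have hnot : ¬ (p.F i (f γ i)).isSome = true := by
          rw [hiδ]; exact fun h => hδ'E ⟨_, h⟩
        have h2 : i < δ' + 1 ∧ ∃ γ' ∈ B', f γ i = f γ' i := by
          rw [hiδ]; exact ⟨hlt1, γ, hγ, rfl⟩
        have h3 : i = δ' ∧ ∃ γ' ∈ B', γ' ∈ C ∧ f γ i = f γ' δ' := by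
          rw [hiδ]; exact ⟨rfl, γ, hγ, hγC, rfl⟩
        simp only [hF'def]
        rw [if_neg hnot, if_pos h2, if_pos h3]
      · have h1 := p.F_one γ hγB hγC i hi
        have hs : (p.F i (f γ i)).isSome = true := by rw [h1]; rfl
        simp only [hF'def]
        rw [if_pos hs]
        exact h1
    have hF'zero : ∀ γ ∈ B', γ ∉ C → ∀ i ∈ c' γ, F' i (f γ i) = some 0 := by
      intro γ hγ hγC i hi
      rcases hi with hiδ | ⟨hγB, hi⟩
      · have hnot : ¬ (p.F i (f γ i)).isSome = true := by
          rw [hiδ]; exact fun h => hδ'E ⟨_, h⟩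
        have h2 : i < δ' + 1 ∧ ∃ γ' ∈ B', f γ i = f γ' i := by
          rw [hiδ]; exact ⟨hlt1, γ, hγ, rfl⟩
        have h3 : ¬ (i = δ' ∧ ∃ γ' ∈ B', γ' ∈ C ∧ f γ i = f γ' δ') := by
          rintro ⟨hiδ2, γ'', hγ'', hγ''C, heq⟩
          rw [hiδ] at heq
          exact hγC ((hinj γ hγ γ'' hγ'' heq) ▸ hγ''C)
        simp only [hF'def]
        rw [if_neg hnot, if_pos h2, if_neg h3]
      · have h1 := p.F_zero γ hγB hγC i hi
        have hs : (p.F i (f γ i)).isSome = true := by rw [h1]; rfl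
        simp only [hF'def]
        rw [if_pos hs]
        exact h1
    have hg'dom : ∀ γ γ' : Ordinal, (g' γ γ').isSome → γ ∈ B' ∧ γ' ∈ B' ∧ γ < γ' := by
      intro γ γ' h
      simp only [hg'def] at h
      split at h
      · obtain ⟨h1, h2, h3⟩ := p.g_dom γ γ' (by assumption)
        exact ⟨Set.subset_insert _ _ h1, Set.subset_insert _ _ h2, h3⟩
      · split at h
        · assumption
        · simp at h
    have hg'rng : ∀ γ γ' ξ : Ordinal, g' γ γ' = some ξ → ξ < μ.ord := by
      intro γ γ' ξ h
      simp only [hg'def] at h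
      split at h
      · exact p.g_rng γ γ' ξ h
      · split at h
        · injection h with h; rw [← h]; exact hδ'lt
        · simp at h
    have hg'cond : ∀ γ γ' ξ : Ordinal, g' γ γ' = some ξ →
        (c' γ \ Set.Iio ξ).Nonempty ∧ c' γ \ Set.Iio ξ ⊆ Cab γ γ' := by
      intro γ γ' ξ h
      simp only [hg'def] at h
      split at h
      · rename_i hsome
        obtain ⟨hγB, hγ'B, hγγ'⟩ := p.g_dom γ γ' hsome
        obtain ⟨⟨x, hx1, hx2⟩, hsub⟩ := p.g_cond γ γ' ξ h
        constructor
        · exact ⟨x, Or.inr ⟨hγB, hx1⟩, hx2⟩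
        · rintro y ⟨hy1, hy2⟩
          rcases hy1 with rfl | ⟨-, hy⟩
          · exact hδ'Cab γ γ' (Set.subset_insert _ _ hγB) (Set.subset_insert _ _ hγ'B) hγγ'
          · exact hsub ⟨hy, hy2⟩
      · split at h
        · rename_i hcond
          obtain ⟨hγ, hγ', hγγ'⟩ := hcond
          injection h with h
          subst h
          constructor
          · exact ⟨δ', Or.inl rfl, fun hlt => absurd (Set.mem_Iio.mp hlt) (lt_irrefl δ')⟩
          · rintro y ⟨hy1, hy2⟩
            have hyδ : y = δ' := le_antisymm (hc'max γ y hy1) (not_lt.mp hy2)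
            rw [hyδ]
            exact hδ'Cab γ γ' hγ hγ' hγγ'
        · simp at h
    refine ⟨⟨B', F', c', g', fun _ => δ' + 1, δ', hB'sub, hB'card, hF'dom, hF'card,
      hj', hc'sub, hc'closed, fun γ _ => ⟨Or.inl rfl, hc'max γ⟩, hF'one, hF'zero,
      hg'dom, hg'rng, hg'cond⟩,
      ⟨Set.subset_insert _ _, ?_, ?_, ?_, ?_⟩, hαB', hβδ'⟩
    · intro i k v h
      show F' i k = some v
      have hs : (p.F i k).isSome = true := by rw [h]; rfl
      simp only [hF'def]
      rw [if_pos hs]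
      exact h
    · intro γ γ' ξ h
      show g' γ γ' = some ξ
      have hs : (p.g γ γ').isSome = true := by rw [h]; rfl
      simp only [hg'def]
      rw [if_pos hs]
      exact h
    · intro γ hγ
      refine ⟨fun x hx => Or.inr ⟨hγ, hx⟩, ?_⟩
      intro x hx hxle
      rcases hx with rfl | ⟨-, hx⟩
      · exact absurd hxle (not_le.mpr (hpδ γ hγ))
      · exact hx
    · intro _ γ hγ γ' hγ' hγγ'
      show (g' γ γ').isSome
      simp only [hg'def]
      split
      · assumption
      · have h2 : γ ∈ B' ∧ γ' ∈ B' ∧ γ < γ' :=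
          ⟨Set.subset_insert _ _ hγ, Set.subset_insert _ _ hγ', hγγ'⟩
        rw [if_pos h2]
        rfl
  · rintro p q hle ⟨hαB, hβδ⟩
    refine ⟨hle.1 hαB, ?_⟩
    have h1 : p.δ ∈ q.c α := (hle.2.2.2.1 α hαB).1 (p.c_max α hαB).1
    have h2 : p.δ ≤ q.δ := (q.c_max α (hle.1 hαB)).2 _ h1
    exact hβδ.trans h2
end

section
/- Let μ = μ^{<μ} > ℵ₀, λ = μ⁺, and let ℙ = ℙ(C) be the club-coding poset associated to a club C ⊆ λ, a choice of μ-filtrations of each α < λ with canonical functions f_α, and clubs C_{αβ} ⊆ μ (for α < β < λ) with f_α(i) < f_β(i) for all i ∈ C_{αβ}. Suppose G ⊆ ℙ is a filter (downward closed and upward directed) such that G meets D_{αβ} = {p ∈ ℙ : α ∈ B^p and δ^p ≥ β} for every α < λ and β < μ. Set f = ⋃_{p ∈ G} f^p and X = {(i,j) ∈ μ × μ : f(i,j) = 1}. Then for every α < λ the set c_α = ⋃{c^p_α : p ∈ G, α ∈ B^p} is a closed unbounded subset of μ; for every α ∈ C the set {i < μ : (i, f_α(i)) ∈ X} contains a closed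 unbounded subset of μ; and for every α ∈ λ ∖ C the set {i < μ : (i, f_α(i)) ∉ X} contains a closed unbounded subset of μ. -/
open Cardinal Ordinal Set

/-- `C` is a closed unbounded subset of (the set of ordinals below) `κ`:
it consists of ordinals `< κ`, is unbounded in `κ`, and contains the supremum
of each of its nonempty subsets that is bounded below `κ`. -/
def IsClub' (κ : Ordinal) (C : Set Ordinal) : Prop :=
  C ⊆ Set.Iio κ ∧
  (∀ a < κ, ∃ b ∈ C, a ≤ b) ∧
  (∀ S ⊆ C, S.Nonempty → sSup S < κ → sSup S ∈ C)

/-- `⟨a i : i < μ⟩` is a `μ`-filtration of the ordinal `α`: an increasing continuous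
sequence of subsets of `α`, each of cardinality `< μ`, with union `α`. -/
def IsFiltration' (μ : Cardinal) (α : Ordinal) (a : Ordinal → Set Ordinal) : Prop :=
  (∀ i < μ.ord, a i ⊆ Set.Iio α) ∧
  (∀ i j : Ordinal, i ≤ j → j < μ.ord → a i ⊆ a j) ∧
  (∀ ν < μ.ord, Order.IsSuccLimit ν → a ν = ⋃ i ∈ Set.Iio ν, a i) ∧
  (∀ i < μ.ord, Cardinal.mk ↥(a i) < Cardinal.lift.{1,0} μ) ∧
  (⋃ i ∈ Set.Iio μ.ord, a i) = Set.Iio α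

/-- Suppose `μ = μ^{<μ} > ℵ₀`, `λ = μ⁺`, and `G` is a filter on the club-coding poset
`ℙ(C)` meeting every `D_{αβ} = {p : α ∈ B^p, δ^p ≥ β}` (`α < λ`, `β < μ`). Let
`X = {(i,k) : (⋃_{p ∈ G} F^p)(i,k) = 1}`. Then for every `α < λ` the set
`c_α = ⋃ {c^p α : p ∈ G, α ∈ B^p}` is a club of `μ`; for `α ∈ C` the set
`{i < μ : (i, f α i) ∈ X}` contains a club of `μ`; and for `α < λ` with `α ∉ C` the set
`{i < μ : (i, f α i) ∉ X}` contains a club of `μ`. -/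
theorem clubCond_generic_filter (μ : Cardinal) (hsmall : μ ^< μ = μ) (hunc : ℵ₀ < μ)
    (C : Set Ordinal) (hC : IsClub' (Order.succ μ).ord C)
    (f : Ordinal → Ordinal → Ordinal)
    (hf : ∀ α < (Order.succ μ).ord, ∃ a : Ordinal → Set Ordinal,
      IsFiltration' μ α a ∧ ∀ i < μ.ord, f α i = otp (a i))
    (Cab : Ordinal → Ordinal → Set Ordinal)
    (hCab : ∀ α β : Ordinal, α < β → β < (Order.succ μ).ord →
      IsClub' μ.ord (Cab α β) ∧ ∀ i ∈ Cab α β, f α i < f β i)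
    (G : Set (ClubCond μ C f Cab))
    (hdown : ∀ p q : ClubCond μ C f Cab, p.le q → q ∈ G → p ∈ G)
    (hdir : ∀ p ∈ G, ∀ q ∈ G, ∃ r ∈ G, p.le r ∧ q.le r)
    (hmeets : ∀ α < (Order.succ μ).ord, ∀ β < μ.ord, ∃ p ∈ G, α ∈ p.B ∧ β ≤ p.δ) :
    (∀ α < (Order.succ μ).ord,
      IsClub' μ.ord (⋃ p ∈ {p ∈ G | α ∈ ClubCond.B p}, ClubCond.c p α)) ∧
    (∀ α ∈ C, ∃ D : Set Ordinal, IsClub' μ.ord D ∧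
      ∀ i ∈ D, ∃ p ∈ G, p.F i (f α i) = some 1) ∧
    (∀ α < (Order.succ μ).ord, α ∉ C → ∃ D : Set Ordinal, IsClub' μ.ord D ∧
      ∀ i ∈ D, ¬ ∃ p ∈ G, p.F i (f α i) = some 1) := by
  have key : ∀ α < (Order.succ μ).ord,
      IsClub' μ.ord (⋃ p ∈ {p ∈ G | α ∈ ClubCond.B p}, ClubCond.c p α) := by
    intro α hα
    set T := ⋃ p ∈ {p ∈ G | α ∈ ClubCond.B p}, ClubCond.c p α with hT
    have hsub : T ⊆ Set.Iio μ.ord := by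
      intro x hx
      simp only [hT, Set.mem_iUnion, Set.mem_setOf_eq] at hx
      obtain ⟨p, ⟨hpG, hpB⟩, hx⟩ := hx
      have h1 := p.c_sub α hpB hx
      have h2 : p.j α ≤ μ.ord := by
        by_contra h
        push_neg at h
        have hm : μ.ord ∈ Set.Iio (p.j α) := h
        rw [← p.j_spec α hpB] at hm
        exact absurd hm.1 (lt_irrefl _)
      exact lt_of_lt_of_le h1 h2
    refine ⟨hsub, ?_, ?_⟩
    · intro a ha
      obtain ⟨p, hpG, hpB, hpδ⟩ := hmeets α hα a ha
      refine ⟨p.δ, ?_, hpδ⟩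
      simp only [hT, Set.mem_iUnion, Set.mem_setOf_eq]
      exact ⟨p, ⟨hpG, hpB⟩, (p.c_max α hpB).1⟩
    · intro S hS hne hlt
      obtain ⟨p, hpG, hpB, hpδ⟩ := hmeets α hα (sSup S) hlt
      have hSsub : S ⊆ p.c α := by
        intro x hxS
        have hx := hS hxS
        simp only [hT, Set.mem_iUnion, Set.mem_setOf_eq] at hx
        obtain ⟨q, ⟨hqG, hqB⟩, hxq⟩ := hx
        obtain ⟨r, hrG, hpr, hqr⟩ := hdir p hpG q hqG
        have hxr : x ∈ r.c α := (hqr.2.2.2.1 α hqB).1 hxq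
        have hxle : x ≤ sSup S :=
          le_csSup ⟨μ.ord, fun y hy => (hsub (hS hy)).le⟩ hxS
        exact (hpr.2.2.2.1 α hpB).2 x hxr (hxle.trans hpδ)
      have hmem := p.c_closed α hpB S hSsub hne
      simp only [hT, Set.mem_iUnion, Set.mem_setOf_eq]
      exact ⟨p, ⟨hpG, hpB⟩, hmem⟩
  refine ⟨key, ?_, ?_⟩
  · intro α hαC
    have hα : α < (Order.succ μ).ord := hC.1 hαC
    refine ⟨_, key α hα, ?_⟩
    intro i hi
    simp only [Set.mem_iUnion, Set.mem_setOf_eq] at hi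
    obtain ⟨p, ⟨hpG, hpB⟩, hip⟩ := hi
    exact ⟨p, hpG, p.F_one α hpB hαC i hip⟩
  · intro α hα hαC
    refine ⟨_, key α hα, ?_⟩
    intro i hi
    simp only [Set.mem_iUnion, Set.mem_setOf_eq] at hi
    obtain ⟨q, ⟨hqG, hqB⟩, hiq⟩ := hi
    rintro ⟨p, hpG, hp1⟩
    obtain ⟨r, hrG, hpr, hqr⟩ := hdir p hpG q hqG
    have h1 : r.F i (f α i) = some 1 := hpr.2.1 i (f α i) 1 hp1
    have h0 : r.F i (f α i) = some 0 :=
      hqr.2.1 i (f α i) 0 (q.F_zero α hqB hαC i hiq)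
    rw [h0] at h1
    exact absurd (Option.some_injective _ h1) (by decide)
end
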